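/- Let V and W be bounded antichain-decomposable persistence modules over ℝ^d. Then the erosion distance satisfies d_E(rk_V, rk_W) = max( sup_{I ∈ Seg_{V,W}} ℰ_V(I), sup_{I ∈ Seg_{W,V}} ℰ_W(I) ), where suprema over the empty set are 0. -/

import Mathlib

open CategoryTheory CategoryTheory.Limits

noncomputable section

/-- Two elements `p q` of a subset `S` of a poset are order-connected in `S` if there is a
finite sequence of elements of `S` from `p` to `q` with consecutive terms comparable. -/
def OrderConnIn {P : Type} [PartialOrder P] (S : Set P) (p q : P) : Prop :=
  p ∈ S ∧ Relation.ReflTransGen (fun a b => b ∈ S ∧ (a ≤ b ∨ b ≤ a)) p q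

/-- A subset `S` of a poset is convex if `p ≤ r ≤ q` with `p, q ∈ S` implies `r ∈ S`. -/
def IsConvexSubset {P : Type} [PartialOrder P] (S : Set P) : Prop :=
  ∀ ⦃p r q : P⦄, p ∈ S → q ∈ S → p ≤ r → r ≤ q → r ∈ S

/-- An interval of a poset: a convex subset any two of whose elements are order-connected. -/
def IsPosetInterval {P : Type} [PartialOrder P] (S : Set P) : Prop :=
  IsConvexSubset S ∧ ∀ p ∈ S, ∀ q ∈ S, OrderConnIn S p q

open Classical in
/-- The submodule of `F` which is everything at points of `I` and zero elsewhere. -/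
def indSub (F : Type) [Field F] {P : Type} (I : Set P) (p : P) : Submodule F F :=
  if p ∈ I then ⊤ else ⊥

open Classical in
/-- The canonical map between submodules of `F`: the inclusion when it exists, zero otherwise. -/
def indMap (F : Type) [Field F] (S T : Submodule F F) : S →ₗ[F] T :=
  if h : S ≤ T then Submodule.inclusion h else 0

theorem indSub_subsingleton {F : Type} [Field F] {P : Type} {I : Set P} {p : P}
    (hp : p ∉ I) : Subsingleton (indSub F I p) := by
  rw [indSub, if_neg hp]
  infer_instance

theorem indMap_comp (F : Type) [Field F] {P : Type} [PartialOrder P] {I : Set P}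
    (hI : IsConvexSubset I) {p q r : P} (hpq : p ≤ q) (hqr : q ≤ r) :
    (indMap F (indSub F I q) (indSub F I r)).comp (indMap F (indSub F I p) (indSub F I q))
      = indMap F (indSub F I p) (indSub F I r) := by
  by_cases hp : p ∈ I
  · by_cases hr : r ∈ I
    · have hq : q ∈ I := hI hp hr hpq hqr
      have h1 : indSub F I p ≤ indSub F I q := by simp [indSub, hp, hq]
      have h2 : indSub F I q ≤ indSub F I r := by simp [indSub, hq, hr]
      have h3 : indSub F I p ≤ indSub F I r := h1.trans h2
      simp only [indMap, dif_pos h1, dif_pos h2, dif_pos h3]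
      ext x
      rfl
    · haveI := indSub_subsingleton (F := F) (I := I) hr
      exact LinearMap.ext fun x => Subsingleton.elim _ _
  · haveI := indSub_subsingleton (F := F) (I := I) hp
    apply LinearMap.ext
    intro x
    rw [Subsingleton.elim x 0]
    simp

/-- The indicator persistence module of a convex subset `I` of a poset `P`: it assigns `F` to
points of `I` and `0` to other points, with identity structure maps between points of `I` and
zero maps otherwise. -/
def indicatorModule (F : Type) [Field F] {P : Type} [PartialOrder P] (I : Set P)
    (hI : IsConvexSubset I) : P ⥤ ModuleCat.{0} F where
  obj p := ModuleCat.of F (indSub F I p)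
  map {p q} f := ModuleCat.ofHom (indMap F (indSub F I p) (indSub F I q))
  map_id p := by
    apply ModuleCat.hom_ext
    change indMap F (indSub F I p) (indSub F I p) = LinearMap.id
    simp only [indMap, dif_pos le_rfl]
    ext x
    rfl
  map_comp {p q r} f g := by
    apply ModuleCat.hom_ext
    change indMap F (indSub F I p) (indSub F I r) = (indMap F (indSub F I q) (indSub F I r)).comp
      (indMap F (indSub F I p) (indSub F I q))
    rw [indMap_comp F hI f.le g.le]

/-- The support of a persistence module: the points where it is nonzero. -/
def suppMod (F : Type) [Field F] {P : Type} [PartialOrder P] (V : P ⥤ ModuleCat.{0} F) :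
    Set P := {p | Nontrivial (V.obj p)}

/-- The rank of the structure map of `V` associated to `p ≤ q`. -/
def rankMap (F : Type) [Field F] {P : Type} [PartialOrder P] (V : P ⥤ ModuleCat.{0} F)
    {p q : P} (h : p ≤ q) : ℕ :=
  Module.finrank F (LinearMap.range (V.map (homOfLE h)).hom)

/-- A persistence module is antichain-decomposable if it is isomorphic to a direct sum of
indicator modules of intervals whose elements are pairwise incomparable across distinct
summands. -/
def IsACD (F : Type) [Field F] {P : Type} [PartialOrder P] (V : P ⥤ ModuleCat.{0} F) : Prop :=
  ∃ (A : Type) (S : A → Set P) (hS : ∀ α, IsPosetInterval (S α)),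
    (∀ ⦃α β : A⦄, α ≠ β → ∀ p ∈ S α, ∀ q ∈ S β, ¬ p ≤ q ∧ ¬ q ≤ p) ∧
    Nonempty (V ≅ ∐ fun α => indicatorModule F (S α) (hS α).1)

/-- A persistence module is thin if it is pointwise of dimension `0` or `1`. -/
def IsThin (F : Type) [Field F] {P : Type} [PartialOrder P] (V : P ⥤ ModuleCat.{0} F) : Prop :=
  ∀ p : P, Module.rank F (V.obj p) = 0 ∨ Module.rank F (V.obj p) = 1

/-- We regard `ℝ^d` (with the product order) as a poset category. -/
instance (d : ℕ) : CategoryTheory.Category (Fin d → ℝ) := Preorder.smallCategory _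

open Classical in
/-- The rank invariant of `V` on the segment `[p, q]` (junk value `0` when `¬ p ≤ q`). -/
def rkInv (F : Type) [Field F] {d : ℕ} (V : (Fin d → ℝ) ⥤ ModuleCat.{0} F)
    (p q : Fin d → ℝ) : ℕ :=
  if h : p ≤ q then Module.finrank F (LinearMap.range (V.map (homOfLE h)).hom) else 0

/-- The rank invariant of `V` on the `ε`-thickening `[p - ε𝟙, q + ε𝟙]` of the segment `[p, q]`. -/
def rkShift (F : Type) [Field F] {d : ℕ} (V : (Fin d → ℝ) ⥤ ModuleCat.{0} F) (ε : ℝ)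
    (p q : Fin d → ℝ) : ℕ :=
  rkInv F V (fun i => p i - ε) (fun i => q i + ε)

/-- `ε` is a feasible erosion for the pair `(rk_V, rk_W)`: for every segment `[p, q]`,
`rk_V([p, q]^{+ε}) ≤ rk_W([p, q])` and `rk_W([p, q]^{+ε}) ≤ rk_V([p, q])`. -/
def Feasible (F : Type) [Field F] {d : ℕ} (V W : (Fin d → ℝ) ⥤ ModuleCat.{0} F) (ε : ℝ) :
    Prop :=
  ∀ p q : Fin d → ℝ, p ≤ q →
    rkShift F V ε p q ≤ rkInv F W p q ∧ rkShift F W ε p q ≤ rkInv F V p q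

/-- The erosion distance between the rank invariants of `V` and `W`. -/
def erosionDist (F : Type) [Field F] {d : ℕ} (V W : (Fin d → ℝ) ⥤ ModuleCat.{0} F) : ℝ :=
  sInf {ε : ℝ | 0 < ε ∧ Feasible F V W ε}

/-- `ℰ_{V,W}(I)` for the segment `I = [p, q]`. -/
def erosionPair (F : Type) [Field F] {d : ℕ} (V W : (Fin d → ℝ) ⥤ ModuleCat.{0} F)
    (p q : Fin d → ℝ) : ℝ :=
  sInf {ε : ℝ | 0 < ε ∧ rkShift F V ε p q ≤ rkInv F W p q ∧ rkShift F W ε p q ≤ rkInv F V p q}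

/-- `ℰ_V(I)` for the segment `I = [p, q]`. -/
def erosionOne (F : Type) [Field F] {d : ℕ} (V : (Fin d → ℝ) ⥤ ModuleCat.{0} F)
    (p q : Fin d → ℝ) : ℝ :=
  sInf {ε : ℝ | 0 < ε ∧ rkShift F V ε p q = 0}

/-- The segment `[p, q]` belongs to `Seg_{V,W}`, i.e. `rk_V([p, q]) = 1` and
`rk_W([p, q]) = 0`. -/
def SegMem (F : Type) [Field F] {d : ℕ} (V W : (Fin d → ℝ) ⥤ ModuleCat.{0} F)
    (p q : Fin d → ℝ) : Prop :=
  p ≤ q ∧ rkInv F V p q = 1 ∧ rkInv F W p q = 0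

/-- `V(u) ≅ F`. -/
def ptIsLine (F : Type) [Field F] {d : ℕ} (V : (Fin d → ℝ) ⥤ ModuleCat.{0} F)
    (u : Fin d → ℝ) : Prop :=
  Nonempty ((V.obj u) ≃ₗ[F] F)

/-- `ℝ^d_{V,W} = {u ∈ ℝ^d : V(u) ≅ F and W(u) = 0}`. -/
def RVW (F : Type) [Field F] {d : ℕ} (V W : (Fin d → ℝ) ⥤ ModuleCat.{0} F) :
    Set (Fin d → ℝ) :=
  {u | ptIsLine F V u ∧ Subsingleton (W.obj u)}

/-- `ℝ^d_V = {u ∈ ℝ^d : V(u) ≅ F}`. -/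
def RV (F : Type) [Field F] {d : ℕ} (V : (Fin d → ℝ) ⥤ ModuleCat.{0} F) :
    Set (Fin d → ℝ) :=
  {u | ptIsLine F V u}

/-- `ℰ^small_V(p) = sup_{q ≥ p} ℰ_V([p, q])`. -/
def erosionSmall (F : Type) [Field F] {d : ℕ} (V : (Fin d → ℝ) ⥤ ModuleCat.{0} F)
    (p : Fin d → ℝ) : ℝ :=
  sSup {x : ℝ | ∃ q : Fin d → ℝ, p ≤ q ∧ x = erosionOne F V p q}

/-- `ℰ^large_V(q) = sup_{p ≤ q} ℰ_V([p, q])`. -/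
def erosionLarge (F : Type) [Field F] {d : ℕ} (V : (Fin d → ℝ) ⥤ ModuleCat.{0} F)
    (q : Fin d → ℝ) : ℝ :=
  sSup {x : ℝ | ∃ p : Fin d → ℝ, p ≤ q ∧ x = erosionOne F V p q}

/-- `ℰ*(V, W) = max( sup_{p ∈ ℝ^d_{V,W}} ℰ^small_V(p), sup_{q ∈ ℝ^d_{V,W}} ℰ^large_V(q) )`. -/
def erosionStar (F : Type) [Field F] {d : ℕ} (V W : (Fin d → ℝ) ⥤ ModuleCat.{0} F) : ℝ :=
  max (sSup {x : ℝ | ∃ p ∈ RVW F V W, x = erosionSmall F V p})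
      (sSup {x : ℝ | ∃ q ∈ RVW F V W, x = erosionLarge F V q})

/-- A bounded antichain-decomposable module over `ℝ^d`: an ACD module whose support is a
bounded subset of `ℝ^d`. -/
def IsBoundedACD (F : Type) [Field F] {d : ℕ} (V : (Fin d → ℝ) ⥤ ModuleCat.{0} F) : Prop :=
  IsACD F V ∧ Bornology.IsBounded (suppMod F V)

section AuxDS
open DirectSum

/-- Direct sum collapses to one component when all others are subsingletons. -/
def dsEquiv (F : Type) [Field F] {A : Type} (M : A → Type) [∀ a, AddCommMonoid (M a)]
    [∀ a, Module F (M a)] (α0 : A) (h : ∀ β, β ≠ α0 → Subsingleton (M β)) :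
    (⨁ β, M β) ≃ₗ[F] M α0 := by
  classical
  exact LinearEquiv.ofLinear (DirectSum.component F A M α0) (DirectSum.lof F A M α0)
    (by ext x; simp [DirectSum.component.lof_self])
    (by
      refine DirectSum.linearMap_ext F fun β => ?_
      ext m
      by_cases hb : β = α0
      · subst hb; simp [DirectSum.component.lof_self]
      · haveI := h β hb
        have hm : m = 0 := Subsingleton.elim _ _
        simp [hm])

end AuxDS

lemma IsACD.rank_obj_le_one {F : Type} [Field F] {d : ℕ} {V : (Fin d → ℝ) ⥤ ModuleCat.{0} F}
    (hV : IsACD F V) (p : Fin d → ℝ) : Module.rank F (V.obj p) ≤ 1 := by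
  classical
  obtain ⟨A, S, hS, hanti, ⟨e⟩⟩ := hV
  set G : A → ((Fin d → ℝ) ⥤ ModuleCat.{0} F) := fun α => indicatorModule F (S α) (hS α).1 with hG
  have e1 : V.obj p ≅ (∐ G).obj p := ((evaluation _ _).obj p).mapIso e
  have e2 : (∐ G).obj p ≅ ∐ (fun α => (G α).obj p) :=
    (colimitObjIsoColimitCompEvaluation (Discrete.functor G) p) ≪≫
      HasColimit.isoOfNatIso (Discrete.natIso fun α => Iso.refl _)
  have e3 := ModuleCat.coprodIsoDirectSum (fun α => (G α).obj p)
  have equ : (V.obj p : Type) ≃ₗ[F] (DirectSum A fun α => ((G α).obj p : Type)) := (e1 ≪≫ e2 ≪≫ e3).toLinearEquiv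
  rw [equ.rank_eq]
  by_cases hp : ∃ α0, p ∈ S α0
  · obtain ⟨α0, hα0⟩ := hp
    have hsub : ∀ β, β ≠ α0 → Subsingleton ((G β).obj p) := by
      intro β hb
      apply indSub_subsingleton
      intro hpb
      exact (hanti hb p hpb p hα0).1 le_rfl
    have equ2 := dsEquiv F (fun α => ((G α).obj p : Type)) α0 hsub
    rw [equ2.rank_eq]
    calc Module.rank F ((G α0).obj p) ≤ Module.rank F F := Submodule.rank_le _
    _ = 1 := Module.rank_self F
  · push_neg at hp
    haveI : ∀ α, Subsingleton ((G α).obj p) := fun α => indSub_subsingleton (hp α)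
    haveI : Subsingleton (DirectSum A fun α => ((G α).obj p : Type)) := inferInstance
    rw [rank_subsingleton']
    exact zero_le_one

lemma IsACD.fd {F : Type} [Field F] {d : ℕ} {V : (Fin d → ℝ) ⥤ ModuleCat.{0} F}
    (hV : IsACD F V) (p : Fin d → ℝ) : FiniteDimensional F (V.obj p) :=
  Module.rank_lt_aleph0_iff.mp (lt_of_le_of_lt (hV.rank_obj_le_one p) Cardinal.one_lt_aleph0)

lemma IsACD.finrank_obj_le_one {F : Type} [Field F] {d : ℕ} {V : (Fin d → ℝ) ⥤ ModuleCat.{0} F}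
    (hV : IsACD F V) (p : Fin d → ℝ) : Module.finrank F (V.obj p) ≤ 1 :=
  Module.finrank_le_of_rank_le (by exact_mod_cast hV.rank_obj_le_one p)

lemma rkInv_le_one {F : Type} [Field F] {d : ℕ} {V : (Fin d → ℝ) ⥤ ModuleCat.{0} F}
    (hV : IsACD F V) (p q : Fin d → ℝ) : rkInv F V p q ≤ 1 := by
  by_cases h : p ≤ q
  · rw [rkInv, dif_pos h]
    haveI := hV.fd p
    exact le_trans (LinearMap.finrank_range_le _) (hV.finrank_obj_le_one p)
  · rw [rkInv, dif_neg h]; exact zero_le_one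

lemma rkInv_eq_zero_left {F : Type} [Field F] {d : ℕ} (V : (Fin d → ℝ) ⥤ ModuleCat.{0} F)
    {a b : Fin d → ℝ} (hab : a ≤ b) (h : Subsingleton (V.obj a)) : rkInv F V a b = 0 := by
  rw [rkInv, dif_pos hab]
  have hz : (V.map (homOfLE hab)).hom = 0 := by
    apply LinearMap.ext; intro x
    rw [Subsingleton.elim x 0]
    simp
  rw [hz, LinearMap.range_zero, finrank_bot]

lemma rkInv_eq_zero_right {F : Type} [Field F] {d : ℕ} (V : (Fin d → ℝ) ⥤ ModuleCat.{0} F)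
    {a b : Fin d → ℝ} (hab : a ≤ b) (h : Subsingleton (V.obj b)) : rkInv F V a b = 0 := by
  rw [rkInv, dif_pos hab]
  haveI : Subsingleton (LinearMap.range (V.map (homOfLE hab)).hom) :=
    ⟨fun x y => Subtype.ext (Subsingleton.elim _ _)⟩
  exact Module.finrank_zero_of_subsingleton

lemma nontrivial_of_rkInv_ne_zero {F : Type} [Field F] {d : ℕ}
    {V : (Fin d → ℝ) ⥤ ModuleCat.{0} F} {a b : Fin d → ℝ} (hab : a ≤ b)
    (h : rkInv F V a b ≠ 0) : Nontrivial (V.obj a) ∧ Nontrivial (V.obj b) := by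
  constructor
  · by_contra hn
    exact h (rkInv_eq_zero_left V hab (not_nontrivial_iff_subsingleton.mp hn))
  · by_contra hn
    exact h (rkInv_eq_zero_right V hab (not_nontrivial_iff_subsingleton.mp hn))

lemma rkInv_zero_mono {F : Type} [Field F] {d : ℕ} {V : (Fin d → ℝ) ⥤ ModuleCat.{0} F}
    (hV : IsACD F V) {a b c e : Fin d → ℝ} (hab : a ≤ b) (hbc : b ≤ c) (hce : c ≤ e)
    (h0 : rkInv F V b c = 0) : rkInv F V a e = 0 := by
  haveI := hV.fd b
  rw [rkInv, dif_pos hbc] at h0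
  have hbot : LinearMap.range (V.map (homOfLE hbc)).hom = ⊥ := Submodule.finrank_eq_zero.mp h0
  have hz : (V.map (homOfLE hbc)).hom = 0 := LinearMap.range_eq_bot.mp hbot
  have hae : a ≤ e := hab.trans (hbc.trans hce)
  rw [rkInv, dif_pos hae]
  have hfac : (V.map (homOfLE hae)).hom = 0 := by
    have h1 : homOfLE hae = homOfLE hab ≫ homOfLE hbc ≫ homOfLE hce := rfl
    rw [h1, Functor.map_comp, Functor.map_comp, ModuleCat.hom_comp, ModuleCat.hom_comp, hz]
    apply LinearMap.ext; intro x
    simp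
  rw [hfac, LinearMap.range_zero, finrank_bot]

lemma supp_bound {F : Type} [Field F] {d : ℕ} {V : (Fin d → ℝ) ⥤ ModuleCat.{0} F}
    (hb : Bornology.IsBounded (suppMod F V)) :
    ∃ R : ℝ, 1 ≤ R ∧ ∀ a ∈ suppMod F V, ∀ i, |a i| ≤ R := by
  obtain ⟨r, hr⟩ := hb.subset_closedBall 0
  refine ⟨max r 1, le_max_right _ _, fun a ha i => ?_⟩
  have h1 : dist a 0 ≤ r := Metric.mem_closedBall.mp (hr ha)
  calc |a i| = dist (a i) ((0 : Fin d → ℝ) i) := by simp [Real.dist_eq]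
    _ ≤ dist a 0 := dist_le_pi_dist a 0 i
    _ ≤ max r 1 := h1.trans (le_max_left _ _)

lemma rkShift_eq_zero_of_large {F : Type} [Field F] {d : ℕ} [Nonempty (Fin d)]
    {V : (Fin d → ℝ) ⥤ ModuleCat.{0} F} {R : ℝ} (hR : 1 ≤ R)
    (hsupp : ∀ a ∈ suppMod F V, ∀ i, |a i| ≤ R)
    {p q : Fin d → ℝ} (hpq : p ≤ q) {ε : ℝ} (hε : R < ε) : rkShift F V ε p q = 0 := by
  show rkInv F V (fun i => p i - ε) (fun i => q i + ε) = 0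
  have hab : (fun i => p i - ε) ≤ (fun i => q i + ε) := fun i => by
    have := hpq i; dsimp only; linarith
  by_cases ha : Nontrivial (V.obj (fun i => p i - ε))
  · have hbnot : ¬ Nontrivial (V.obj (fun i => q i + ε)) := by
      intro hbn
      obtain ⟨i⟩ := ‹Nonempty (Fin d)›
      have h1 := abs_le.mp (hsupp _ ha i)
      have h2 := abs_le.mp (hsupp _ hbn i)
      have h3 := hpq i
      linarith
    exact rkInv_eq_zero_right V hab (not_nontrivial_iff_subsingleton.mp hbnot)
  · exact rkInv_eq_zero_left V hab (not_nontrivial_iff_subsingleton.mp ha)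

lemma rkShift_le_one {F : Type} [Field F] {d : ℕ} {V : (Fin d → ℝ) ⥤ ModuleCat.{0} F}
    (hV : IsACD F V) (ε : ℝ) (p q : Fin d → ℝ) : rkShift F V ε p q ≤ 1 :=
  rkInv_le_one hV _ _

lemma rkShift_zero_of_rkInv_zero {F : Type} [Field F] {d : ℕ}
    {V : (Fin d → ℝ) ⥤ ModuleCat.{0} F} (hV : IsACD F V) {p q : Fin d → ℝ} (hpq : p ≤ q)
    {ε : ℝ} (hε : 0 ≤ ε) (h : rkInv F V p q = 0) : rkShift F V ε p q = 0 := by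
  show rkInv F V (fun i => p i - ε) (fun i => q i + ε) = 0
  exact rkInv_zero_mono hV (fun i => by show p i - ε ≤ p i; linarith) hpq
    (fun i => by show q i ≤ q i + ε; linarith) h

lemma rkShift_zero_mono {F : Type} [Field F] {d : ℕ}
    {V : (Fin d → ℝ) ⥤ ModuleCat.{0} F} (hV : IsACD F V) {p q : Fin d → ℝ} (hpq : p ≤ q)
    {δ ε : ℝ} (hδ : 0 ≤ δ) (hδε : δ ≤ ε) (h : rkShift F V δ p q = 0) :
    rkShift F V ε p q = 0 := by
  show rkInv F V (fun i => p i - ε) (fun i => q i + ε) = 0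
  refine rkInv_zero_mono hV (b := fun i => p i - δ) (c := fun i => q i + δ)
    (fun i => by dsimp only; linarith) (fun i => by have := hpq i; dsimp only; linarith)
    (fun i => by dsimp only; linarith) h

lemma erosionOne_nonneg {F : Type} [Field F] {d : ℕ} (V : (Fin d → ℝ) ⥤ ModuleCat.{0} F)
    (p q : Fin d → ℝ) : 0 ≤ erosionOne F V p q :=
  Real.sInf_nonneg (fun x hx => hx.1.le)

lemma erosionOne_le_of_large {F : Type} [Field F] {d : ℕ} [Nonempty (Fin d)]
    {V : (Fin d → ℝ) ⥤ ModuleCat.{0} F} {R : ℝ} (hR : 1 ≤ R)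
    (hsupp : ∀ a ∈ suppMod F V, ∀ i, |a i| ≤ R) {p q : Fin d → ℝ} (hpq : p ≤ q) :
    erosionOne F V p q ≤ R + 1 := by
  apply csInf_le
  · exact ⟨0, fun x hx => hx.1.le⟩
  · exact ⟨by linarith, rkShift_eq_zero_of_large hR hsupp hpq (by linarith)⟩


/-- the erosion distance between bounded ACD modules over `ℝ^d` equals the
maximum of the suprema of `ℰ_V` over `Seg_{V,W}` and of `ℰ_W` over `Seg_{W,V}`. -/
theorem erosion_dist_eq_max_sup (F : Type) [Field F] {d : ℕ}
    (V W : (Fin d → ℝ) ⥤ ModuleCat.{0} F)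
    (hV : IsBoundedACD F V) (hW : IsBoundedACD F W) :
    erosionDist F V W =
      max (sSup {x : ℝ | ∃ p q : Fin d → ℝ, SegMem F V W p q ∧ x = erosionOne F V p q})
          (sSup {x : ℝ | ∃ p q : Fin d → ℝ, SegMem F W V p q ∧ x = erosionOne F W p q}) := by
  obtain ⟨hVacd, hVb⟩ := hV
  obtain ⟨hWacd, hWb⟩ := hW
  set E1 := {x : ℝ | ∃ p q : Fin d → ℝ, SegMem F V W p q ∧ x = erosionOne F V p q} with hE1
  set E2 := {x : ℝ | ∃ p q : Fin d → ℝ, SegMem F W V p q ∧ x = erosionOne F W p q} with hE2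
  rcases isEmpty_or_nonempty (Fin d) with hd | hd
  · -- degenerate case `d = 0`
    haveI : Subsingleton (Fin d → ℝ) := ⟨fun f g => funext fun i => (hd.false i).elim⟩
    have key : ∀ (U : (Fin d → ℝ) ⥤ ModuleCat.{0} F) (ε : ℝ) (p q : Fin d → ℝ),
        rkShift F U ε p q = rkInv F U p q := by
      intro U ε p q
      show rkInv F U (fun i => p i - ε) (fun i => q i + ε) = rkInv F U p q
      rw [Subsingleton.elim (fun i => p i - ε) p, Subsingleton.elim (fun i => q i + ε) q]
    have hzero : ∀ (U U' : (Fin d → ℝ) ⥤ ModuleCat.{0} F) (p q : Fin d → ℝ),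
        SegMem F U U' p q → erosionOne F U p q = 0 := by
      intro U U' p q hseg
      have hempty : {ε : ℝ | 0 < ε ∧ rkShift F U ε p q = 0} = ∅ := by
        ext ε
        simp only [Set.mem_setOf_eq, Set.mem_empty_iff_false, iff_false, not_and]
        intro _
        rw [key, hseg.2.1]
        exact one_ne_zero
      rw [erosionOne, hempty, Real.sInf_empty]
    have hsupE : ∀ (U U' : (Fin d → ℝ) ⥤ ModuleCat.{0} F),
        sSup {x : ℝ | ∃ p q : Fin d → ℝ, SegMem F U U' p q ∧ x = erosionOne F U p q} = 0 := by
      intro U U'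
      have hsub : {x : ℝ | ∃ p q : Fin d → ℝ, SegMem F U U' p q ∧ x = erosionOne F U p q}
          ⊆ {(0 : ℝ)} := by
        rintro x ⟨p, q, hseg, rfl⟩
        exact hzero U U' p q hseg
      rcases Set.subset_singleton_iff_eq.mp hsub with h | h
      · rw [h, Real.sSup_empty]
      · rw [h, csSup_singleton]
    have hz : Fin d → ℝ := fun _ => 0
    have hdist : erosionDist F V W = 0 := by
      by_cases hrs : rkInv F V (fun _ => 0) (fun _ => 0) = rkInv F W (fun _ => 0) (fun _ => 0)
      · have hset : {ε : ℝ | 0 < ε ∧ Feasible F V W ε} = Set.Ioi 0 := by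
          ext ε
          constructor
          · exact fun h => h.1
          · intro h
            refine ⟨h, fun p q hpq => ?_⟩
            rw [key, key, Subsingleton.elim p (fun _ => (0:ℝ)),
              Subsingleton.elim q (fun _ => (0:ℝ)), hrs]
            exact ⟨le_rfl, le_rfl⟩
        rw [erosionDist, hset, csInf_Ioi]
      · have hset : {ε : ℝ | 0 < ε ∧ Feasible F V W ε} = ∅ := by
          ext ε
          simp only [Set.mem_setOf_eq, Set.mem_empty_iff_false, iff_false, not_and]
          intro _ hf
          have h1 := hf (fun _ => 0) (fun _ => 0) le_rfl
          rw [key, key] at h1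
          exact hrs (le_antisymm h1.1 h1.2)
        rw [erosionDist, hset, Real.sInf_empty]
    rw [hdist, hE1, hE2, hsupE V W, hsupE W V]
    simp
  · -- main case `d ≥ 1`
    obtain ⟨R₁, hR₁, hs₁⟩ := supp_bound hVb
    obtain ⟨R₂, hR₂, hs₂⟩ := supp_bound hWb
    have hfeasBig : Feasible F V W (max R₁ R₂ + 1) := by
      intro p q hpq
      constructor
      · rw [rkShift_eq_zero_of_large hR₁ hs₁ hpq
          (lt_of_le_of_lt (le_max_left R₁ R₂) (lt_add_one _))]
        exact Nat.zero_le _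
      · rw [rkShift_eq_zero_of_large hR₂ hs₂ hpq
          (lt_of_le_of_lt (le_max_right R₁ R₂) (lt_add_one _))]
        exact Nat.zero_le _
    have hne : {ε : ℝ | 0 < ε ∧ Feasible F V W ε}.Nonempty :=
      ⟨max R₁ R₂ + 1, by have := le_max_left R₁ R₂; linarith, hfeasBig⟩
    have hbd : BddBelow {ε : ℝ | 0 < ε ∧ Feasible F V W ε} := ⟨0, fun x hx => hx.1.le⟩
    have hE1b : ∀ x ∈ E1, 0 ≤ x ∧ x ≤ R₁ + 1 := by
      rintro x ⟨p, q, hseg, rfl⟩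
      exact ⟨erosionOne_nonneg V p q, erosionOne_le_of_large hR₁ hs₁ hseg.1⟩
    have hE2b : ∀ x ∈ E2, 0 ≤ x ∧ x ≤ R₂ + 1 := by
      rintro x ⟨p, q, hseg, rfl⟩
      exact ⟨erosionOne_nonneg W p q, erosionOne_le_of_large hR₂ hs₂ hseg.1⟩
    have hE1bdd : BddAbove E1 := ⟨R₁ + 1, fun x hx => (hE1b x hx).2⟩
    have hE2bdd : BddAbove E2 := ⟨R₂ + 1, fun x hx => (hE2b x hx).2⟩
    have hge : max (sSup E1) (sSup E2) ≤ erosionDist F V W := by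
      apply le_csInf hne
      rintro ε ⟨hεpos, hεf⟩
      apply max_le
      · apply Real.sSup_le _ hεpos.le
        rintro x ⟨p, q, hseg, rfl⟩
        apply csInf_le ⟨0, fun y hy => hy.1.le⟩
        refine ⟨hεpos, ?_⟩
        have h1 := (hεf p q hseg.1).1
        rw [hseg.2.2] at h1
        exact Nat.le_zero.mp h1
      · apply Real.sSup_le _ hεpos.le
        rintro x ⟨p, q, hseg, rfl⟩
        apply csInf_le ⟨0, fun y hy => hy.1.le⟩
        refine ⟨hεpos, ?_⟩
        have h1 := (hεf p q hseg.1).2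
        rw [hseg.2.2] at h1
        exact Nat.le_zero.mp h1
    have hM0 : 0 ≤ max (sSup E1) (sSup E2) :=
      le_trans (Real.sSup_nonneg fun x hx => (hE1b x hx).1) (le_max_left _ _)
    have hstep : ∀ δ : ℝ, 0 < δ →
        erosionDist F V W ≤ max (sSup E1) (sSup E2) + δ := by
      intro δ hδ
      apply csInf_le hbd
      refine ⟨by linarith, ?_⟩
      intro p q hpq
      constructor
      · rcases Nat.eq_zero_or_pos (rkInv F W p q) with hW0 | hWpos
        · rw [hW0]
          by_cases hv : rkInv F V p q = 0
          · exact Nat.le_zero.mpr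
              (rkShift_zero_of_rkInv_zero hVacd hpq (by linarith) hv)
          · have hv1 : rkInv F V p q = 1 :=
              le_antisymm (rkInv_le_one hVacd p q) (Nat.one_le_iff_ne_zero.mpr hv)
            have hseg : SegMem F V W p q := ⟨hpq, hv1, hW0⟩
            have hmem : erosionOne F V p q ∈ E1 := ⟨p, q, hseg, rfl⟩
            have hltM : erosionOne F V p q < max (sSup E1) (sSup E2) + δ :=
              lt_of_le_of_lt ((le_csSup hE1bdd hmem).trans (le_max_left _ _)) (by linarith)
            have hne' : {ε : ℝ | 0 < ε ∧ rkShift F V ε p q = 0}.Nonempty :=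
              ⟨R₁ + 1, by linarith, rkShift_eq_zero_of_large hR₁ hs₁ hpq (by linarith)⟩
            obtain ⟨δ', hδ'mem, hδ'lt⟩ :=
              (csInf_lt_iff ⟨0, fun y hy => hy.1.le⟩ hne').mp hltM
            exact Nat.le_zero.mpr
              (rkShift_zero_mono hVacd hpq hδ'mem.1.le hδ'lt.le hδ'mem.2)
        · exact (rkShift_le_one hVacd _ p q).trans hWpos
      · rcases Nat.eq_zero_or_pos (rkInv F V p q) with hV0 | hVpos
        · rw [hV0]
          by_cases hw : rkInv F W p q = 0
          · exact Nat.le_zero.mpr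
              (rkShift_zero_of_rkInv_zero hWacd hpq (by linarith) hw)
          · have hw1 : rkInv F W p q = 1 :=
              le_antisymm (rkInv_le_one hWacd p q) (Nat.one_le_iff_ne_zero.mpr hw)
            have hseg : SegMem F W V p q := ⟨hpq, hw1, hV0⟩
            have hmem : erosionOne F W p q ∈ E2 := ⟨p, q, hseg, rfl⟩
            have hltM : erosionOne F W p q < max (sSup E1) (sSup E2) + δ :=
              lt_of_le_of_lt ((le_csSup hE2bdd hmem).trans (le_max_right _ _)) (by linarith)
            have hne' : {ε : ℝ | 0 < ε ∧ rkShift F W ε p q = 0}.Nonempty :=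
              ⟨R₂ + 1, by linarith, rkShift_eq_zero_of_large hR₂ hs₂ hpq (by linarith)⟩
            obtain ⟨δ', hδ'mem, hδ'lt⟩ :=
              (csInf_lt_iff ⟨0, fun y hy => hy.1.le⟩ hne').mp hltM
            exact Nat.le_zero.mpr
              (rkShift_zero_mono hWacd hpq hδ'mem.1.le hδ'lt.le hδ'mem.2)
        · exact (rkShift_le_one hWacd _ p q).trans hVpos
    have hle : erosionDist F V W ≤ max (sSup E1) (sSup E2) := by
      refine le_of_not_gt fun hlt => ?_
      have h1 := hstep ((erosionDist F V W - max (sSup E1) (sSup E2)) / 2) (by linarith)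
      linarith
    exact le_antisymm hle hge


end
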